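/- Uniform wave-packet bound for admissible observation operators (Proposition 4.4): Suppose C is bounded and admissible, and let ε > 0. Then there exists M > 0 such that for every μ ≥ 0 and every z ∈ X₂ supported in {k : |μ − λ k| ≥ ε}, ‖C z‖² ≤ M · Σ_k (λ k − μ)² |z k|². -/

import Mathlib

open scoped BigOperators

set_option maxHeartbeats 1000000
set_option linter.unusedSectionVars false

/-- Membership in `X₂`: the sequence of coefficients against eigenvalues squared is summable. -/
def MemX2 (lam : ℕ → ℝ) (z : ℕ → ℂ) : Prop :=
  Summable fun k => (lam k)^2 * ‖z k‖^2

/-- Time evolution `z(t) k = exp(i t λ_k) z₀ k` of the diagonal Schrödinger group. -/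
noncomputable def zEvol (lam : ℕ → ℝ) (z0 : ℕ → ℂ) (t : ℝ) : ℕ → ℂ :=
  fun k => Complex.exp (Complex.I * (t * lam k)) * z0 k

noncomputable def Acoef (lam : ℕ → ℝ) (μ : ℝ) (k : ℕ) (t : ℝ) : ℂ :=
  (1 - (t:ℂ)) * Complex.exp ((t:ℂ) * (Complex.I * ((lam k : ℂ) - (μ:ℂ))))

noncomputable def Acoef' (lam : ℕ → ℝ) (μ : ℝ) (k : ℕ) (t : ℝ) : ℂ :=
  -Complex.exp ((t:ℂ) * (Complex.I * ((lam k : ℂ) - (μ:ℂ)))) +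
    (1 - (t:ℂ)) * (Complex.exp ((t:ℂ) * (Complex.I * ((lam k : ℂ) - (μ:ℂ)))) *
      (Complex.I * ((lam k : ℂ) - (μ:ℂ))))

lemma hasDerivAt_Acoef (lam : ℕ → ℝ) (μ : ℝ) (k : ℕ) (t : ℝ) :
    HasDerivAt (Acoef lam μ k) (Acoef' lam μ k t) t := by
  have h1 : HasDerivAt (fun t : ℝ => (1 - (t:ℂ))) (-1) t := by
    simpa using (Complex.ofRealCLM.hasDerivAt (x := t)).const_sub 1
  have hin : HasDerivAt (fun t : ℝ => (t:ℂ) * (Complex.I * ((lam k : ℂ) - (μ:ℂ))))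
      (Complex.I * ((lam k : ℂ) - (μ:ℂ))) t := by
    simpa using (Complex.ofRealCLM.hasDerivAt (x := t)).mul_const _
  have h2 := hin.cexp
  have := h1.fun_mul h2
  unfold Acoef Acoef'
  exact this.congr_deriv (by ring)

variable {Y : Type} [NormedAddCommGroup Y] [InnerProductSpace ℂ Y] [CompleteSpace Y]

lemma sum_single (C : (ℕ → ℂ) →ₗ[ℂ] Y) (s : Finset ℕ) (a : ℕ → ℂ) :
    ∑ k ∈ s, a k • C (Pi.single k 1) = C (fun j => if j ∈ s then a j else 0) := by
  have : (fun j => if j ∈ s then a j else 0) = ∑ k ∈ s, a k • (Pi.single k (1:ℂ) : ℕ → ℂ) := by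
    funext j
    simp only [Finset.sum_apply, Pi.smul_apply, Pi.single_apply, smul_eq_mul,
      mul_ite, mul_one, mul_zero]
    rw [Finset.sum_ite_eq s j a]
  rw [this, map_sum]
  simp [map_smul]

/-- For finitely supported z, C of a coefficient-wise multiple is the finite sum. -/
lemma C_rep (C : (ℕ → ℂ) →ₗ[ℂ] Y) (s : Finset ℕ) (z : ℕ → ℂ) (hzs : ∀ k ∉ s, z k = 0)
    (b : ℕ → ℂ) :
    C (fun k => b k * z k) = ∑ k ∈ s, (b k * z k) • C (Pi.single k 1) := by
  rw [sum_single]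
  congr 1
  funext j
  by_cases hj : j ∈ s
  · simp [hj]
  · simp [hj, hzs j hj]

lemma C_zEvol_rep (lam : ℕ → ℝ) (C : (ℕ → ℂ) →ₗ[ℂ] Y) (s : Finset ℕ) (z : ℕ → ℂ)
    (hzs : ∀ k ∉ s, z k = 0) (t : ℝ) :
    C (zEvol lam z t) = ∑ k ∈ s, (Complex.exp (Complex.I * ((t:ℂ) * (lam k : ℂ))) * z k) • C (Pi.single k 1) := by
  rw [← C_rep C s z hzs]
  rfl

lemma cont_C_zEvol (lam : ℕ → ℝ) (C : (ℕ → ℂ) →ₗ[ℂ] Y) (s : Finset ℕ) (z : ℕ → ℂ)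
    (hzs : ∀ k ∉ s, z k = 0) :
    Continuous fun t => C (zEvol lam z t) := by
  have : (fun t => C (zEvol lam z t)) =
      fun t : ℝ => ∑ k ∈ s, (Complex.exp (Complex.I * ((t:ℂ) * (lam k : ℂ))) * z k) • C (Pi.single k 1) := by
    funext t; exact C_zEvol_rep lam C s z hzs t
  rw [this]
  apply continuous_finset_sum
  intro k _
  apply Continuous.smul _ continuous_const
  fun_prop

lemma deriv_rep (lam : ℕ → ℝ) (μ : ℝ) (C : (ℕ → ℂ) →ₗ[ℂ] Y) (s : Finset ℕ) (z : ℕ → ℂ)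
    (hzs : ∀ k ∉ s, z k = 0) (t : ℝ) :
    ∑ k ∈ s, (Acoef' lam μ k t * z k) • C (Pi.single k 1)
      = (-(Complex.exp (-((t:ℂ) * (Complex.I * (μ:ℂ)))))) • C (zEvol lam z t)
        + (((1:ℂ) - (t:ℂ)) * Complex.exp (-((t:ℂ) * (Complex.I * (μ:ℂ)))))
            • C (zEvol lam (fun k => (Complex.I * ((lam k : ℂ) - (μ:ℂ))) * z k) t) := by
  have hws : ∀ k ∉ s, (Complex.I * ((lam k : ℂ) - (μ:ℂ))) * z k = 0 :=
    fun k hk => by simp [hzs k hk]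
  rw [C_zEvol_rep lam C s z hzs, C_zEvol_rep lam C s _ hws,
    Finset.smul_sum, Finset.smul_sum, ← Finset.sum_add_distrib]
  apply Finset.sum_congr rfl
  intro k _
  simp only [smul_smul, ← add_smul]
  congr 1
  have hexp : Complex.exp ((t:ℂ) * (Complex.I * ((lam k : ℂ) - (μ:ℂ))))
      = Complex.exp (-((t:ℂ) * (Complex.I * (μ:ℂ)))) * Complex.exp (Complex.I * ((t:ℂ) * (lam k:ℂ))) := by
    rw [← Complex.exp_add]; congr 1; ring
  unfold Acoef'
  rw [hexp]
  ring

lemma cs01 (f : ℝ → ℝ) (hf : Continuous f) (hf0 : ∀ t, 0 ≤ f t) :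
    (∫ t in (0:ℝ)..1, f t)^2 ≤ ∫ t in (0:ℝ)..1, (f t)^2 := by
  set I1 := ∫ t in (0:ℝ)..1, f t with hI1
  set I2 := ∫ t in (0:ℝ)..1, (f t)^2 with hI2
  have hint : IntervalIntegrable f MeasureTheory.volume 0 1 := hf.intervalIntegrable _ _
  have hint2 : IntervalIntegrable (fun t => (f t)^2) MeasureTheory.volume 0 1 :=
    (hf.pow 2).intervalIntegrable _ _
  have hI1nn : 0 ≤ I1 := intervalIntegral.integral_nonneg (by norm_num) (fun t _ => hf0 t)
  have hI2nn : 0 ≤ I2 := intervalIntegral.integral_nonneg (by norm_num) (fun t _ => sq_nonneg _)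
  have key : ∀ s : ℝ, 0 < s → I1 ≤ s/2 + I2/(2*s) := by
    intro s hs
    have hmono : I1 ≤ ∫ t in (0:ℝ)..1, (s/2 + (f t)^2/(2*s)) := by
      apply intervalIntegral.integral_mono_on (by norm_num) hint
      · exact (intervalIntegrable_const).add (hint2.div_const _)
      · intro t _
        have h1 := sq_nonneg (f t - s)
        have h2s : 0 < 2*s := by linarith
        rw [div_add_div _ _ (by norm_num : (2:ℝ) ≠ 0) (ne_of_gt h2s), le_div_iff₀ (by positivity)]
        nlinarith [hf0 t]
    have : (∫ t in (0:ℝ)..1, (s/2 + (f t)^2/(2*s))) = s/2 + I2/(2*s) := by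
      rw [intervalIntegral.integral_add intervalIntegrable_const (hint2.div_const _)]
      simp [intervalIntegral.integral_div, hI2]
    linarith [hmono, this.le, this.ge]
  by_cases h2 : I2 = 0
  · have : I1 ≤ 0 := by
      by_contra h
      push_neg at h
      have := key I1 h
      rw [h2] at this
      simp at this
      linarith
    nlinarith
  · have h2pos : 0 < I2 := lt_of_le_of_ne hI2nn (Ne.symm h2)
    have hthis := key (Real.sqrt I2) (Real.sqrt_pos.mpr h2pos)
    have hs : Real.sqrt I2 * Real.sqrt I2 = I2 := Real.mul_self_sqrt hI2nn
    have hsp : 0 < Real.sqrt I2 := Real.sqrt_pos.mpr h2pos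
    have hfin : I1 ≤ Real.sqrt I2 := by
      have h2 : I2 / (2 * Real.sqrt I2) = Real.sqrt I2 / 2 := by
        field_simp
        nlinarith
      rw [h2] at hthis
      linarith
    nlinarith [hfin]

lemma key (lam : ℕ → ℝ) (C : (ℕ → ℂ) →ₗ[ℂ] Y) (K : ℝ) (hK : 0 < K)
    (hadm1 : ∀ z0 : ℕ → ℂ, MemX2 lam z0 →
      (∫ t in (0:ℝ)..1, ‖C (zEvol lam z0 t)‖^2) ≤ K * ∑' k, ‖z0 k‖^2)
    (ε μ : ℝ) (hε : 0 < ε) (z : ℕ → ℂ) (s : Finset ℕ) (hzs : ∀ k ∉ s, z k = 0)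
    (hsupp : ∀ k, z k ≠ 0 → ε ≤ |μ - lam k|) :
    ‖C z‖^2 ≤ (2*K*(1 + ε⁻¹^2)) * ∑' k, (lam k - μ)^2 * ‖z k‖^2 := by
  have hws : ∀ k ∉ s, (Complex.I * ((lam k : ℂ) - (μ:ℂ))) * z k = 0 :=
    fun k hk => by simp [hzs k hk]
  set w : ℕ → ℂ := fun k => (Complex.I * ((lam k : ℂ) - (μ:ℂ))) * z k with hw
  have hzX2 : MemX2 lam z :=
    summable_of_ne_finset_zero (s := s) (fun k hk => by simp [hzs k hk])
  have hwX2 : MemX2 lam w :=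
    summable_of_ne_finset_zero (s := s) (fun k hk => by simp [hw, hzs k hk])
  -- F and its derivative
  have hderiv : ∀ t : ℝ, HasDerivAt (fun t => ∑ k ∈ s, (Acoef lam μ k t * z k) • C (Pi.single k 1))
      ((-(Complex.exp (-((t:ℂ) * (Complex.I * (μ:ℂ)))))) • C (zEvol lam z t)
        + (((1:ℂ) - (t:ℂ)) * Complex.exp (-((t:ℂ) * (Complex.I * (μ:ℂ))))) • C (zEvol lam w t)) t := by
    intro t
    rw [← deriv_rep lam μ C s z hzs t]
    apply HasDerivAt.fun_sum
    intro k _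
    exact ((hasDerivAt_Acoef lam μ k t).mul_const (z k)).smul_const _
  -- norms of scalars
  have habs1 : ∀ t : ℝ, ‖Complex.exp (-((t:ℂ) * (Complex.I * (μ:ℂ))))‖ = 1 := by
    intro t
    rw [Complex.norm_exp]
    simp
  -- FTC
  set H : ℝ → Y := fun t =>
    (-(Complex.exp (-((t:ℂ) * (Complex.I * (μ:ℂ)))))) • C (zEvol lam z t)
      + (((1:ℂ) - (t:ℂ)) * Complex.exp (-((t:ℂ) * (Complex.I * (μ:ℂ))))) • C (zEvol lam w t)
    with hH
  have hcontz : Continuous fun t => C (zEvol lam z t) := cont_C_zEvol lam C s z hzs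
  have hcontw : Continuous fun t => C (zEvol lam w t) := cont_C_zEvol lam C s w hws
  have hHcont : Continuous H := by
    apply Continuous.add
    · exact Continuous.smul (by fun_prop) hcontz
    · exact Continuous.smul (by fun_prop) hcontw
  have hftc : (∫ t in (0:ℝ)..1, H t)
      = (∑ k ∈ s, (Acoef lam μ k 1 * z k) • C (Pi.single k 1))
        - (∑ k ∈ s, (Acoef lam μ k 0 * z k) • C (Pi.single k 1)) := by
    exact intervalIntegral.integral_eq_sub_of_hasDerivAt
      (f := fun t => ∑ k ∈ s, (Acoef lam μ k t * z k) • C (Pi.single k 1)) (f' := H)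
      (fun t _ => hderiv t) (hHcont.intervalIntegrable _ _)
  have hval1 : (∑ k ∈ s, (Acoef lam μ k 1 * z k) • C (Pi.single k 1)) = 0 := by
    unfold Acoef; simp
  have hval0 : (∑ k ∈ s, (Acoef lam μ k 0 * z k) • C (Pi.single k 1)) = C z := by
    have h1 : ∀ k, Acoef lam μ k 0 = 1 := fun k => by unfold Acoef; simp
    simp only [h1, one_mul]
    rw [sum_single]
    congr 1
    funext j
    by_cases hj : j ∈ s
    · simp [hj]
    · simp [hj, hzs j hj]
  have hCz : C z = -∫ t in (0:ℝ)..1, H t := by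
    rw [hftc, hval1, hval0]; simp
  -- norm bound
  have hnorm : ‖C z‖ ≤ ∫ t in (0:ℝ)..1, (‖C (zEvol lam z t)‖ + ‖C (zEvol lam w t)‖) := by
    rw [hCz, norm_neg]
    calc ‖∫ t in (0:ℝ)..1, H t‖ ≤ ∫ t in (0:ℝ)..1, ‖H t‖ := by
          apply intervalIntegral.norm_integral_le_integral_norm (by norm_num)
      _ ≤ _ := by
          apply intervalIntegral.integral_mono_on (by norm_num)
            (hHcont.norm.intervalIntegrable _ _)
            ((hcontz.norm.add hcontw.norm).intervalIntegrable _ _)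
          intro t ht
          rw [hH]
          apply (norm_add_le _ _).trans
          apply add_le_add
          · rw [norm_smul, norm_neg, habs1, one_mul]
          · rw [norm_smul, norm_mul, habs1, mul_one]
            have hb : ‖(1:ℂ) - (t:ℂ)‖ ≤ 1 := by
              have he : ((1:ℂ) - (t:ℂ)) = ((1 - t : ℝ) : ℂ) := by push_cast; ring
              rw [he, Complex.norm_real, Real.norm_eq_abs, abs_le]
              exact ⟨by linarith [ht.2], by linarith [ht.1]⟩
            exact mul_le_of_le_one_left (norm_nonneg _) hb
  -- Cauchy-Schwarz and admissibility
  set f : ℝ → ℝ := fun t => ‖C (zEvol lam z t)‖ with hf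
  set g : ℝ → ℝ := fun t => ‖C (zEvol lam w t)‖ with hg
  have hfc : Continuous f := hcontz.norm
  have hgc : Continuous g := hcontw.norm
  have hphic : Continuous (fun t => f t + g t) := hfc.add hgc
  have hcs : (∫ t in (0:ℝ)..1, (f t + g t))^2 ≤ ∫ t in (0:ℝ)..1, (f t + g t)^2 :=
    cs01 _ hphic (fun t => add_nonneg (norm_nonneg _) (norm_nonneg _))
  have hsplit : (∫ t in (0:ℝ)..1, (f t + g t)^2)
      ≤ 2 * (∫ t in (0:ℝ)..1, (f t)^2) + 2 * (∫ t in (0:ℝ)..1, (g t)^2) := by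
    have h1 : (∫ t in (0:ℝ)..1, (f t + g t)^2)
        ≤ ∫ t in (0:ℝ)..1, (2*(f t)^2 + 2*(g t)^2) := by
      apply intervalIntegral.integral_mono_on (by norm_num)
        ((hphic.pow 2).intervalIntegrable _ _)
        (((continuous_const.mul (hfc.pow 2)).add (continuous_const.mul (hgc.pow 2))).intervalIntegrable _ _)
      intro t _
      show (f t + g t)^2 ≤ 2*(f t)^2 + 2*(g t)^2
      nlinarith [sq_nonneg (f t - g t)]
    have h2 : (∫ t in (0:ℝ)..1, (2*(f t)^2 + 2*(g t)^2))
        = 2 * (∫ t in (0:ℝ)..1, (f t)^2) + 2 * (∫ t in (0:ℝ)..1, (g t)^2) := by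
      rw [intervalIntegral.integral_add (f := fun t => 2*(f t)^2) (g := fun t => 2*(g t)^2) ((continuous_const.mul (hfc.pow 2)).intervalIntegrable _ _)
        ((continuous_const.mul (hgc.pow 2)).intervalIntegrable _ _),
        intervalIntegral.integral_const_mul, intervalIntegral.integral_const_mul]
    linarith [h1, h2.le, h2.ge]
  have hadmz : (∫ t in (0:ℝ)..1, (f t)^2) ≤ K * ∑' k, ‖z k‖^2 := hadm1 z hzX2
  have hadmw : (∫ t in (0:ℝ)..1, (g t)^2) ≤ K * ∑' k, ‖w k‖^2 := hadm1 w hwX2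
  -- identify sums
  have hwsum : (∑' k, ‖w k‖^2) = ∑' k, (lam k - μ)^2 * ‖z k‖^2 := by
    apply tsum_congr
    intro k
    have : ‖w k‖ = |lam k - μ| * ‖z k‖ := by
      rw [hw]
      simp only [norm_mul, Complex.norm_I, one_mul]
      congr 1
      have : ((lam k : ℂ) - (μ:ℂ)) = ((lam k - μ : ℝ) : ℂ) := by push_cast; ring
      rw [this, Complex.norm_real, Real.norm_eq_abs]
    rw [this, mul_pow, sq_abs]
  have hSnn : 0 ≤ ∑' k, (lam k - μ)^2 * ‖z k‖^2 :=
    tsum_nonneg (fun k => mul_nonneg (sq_nonneg _) (sq_nonneg _))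
  have hzsum : (∑' k, ‖z k‖^2) ≤ ε⁻¹^2 * ∑' k, (lam k - μ)^2 * ‖z k‖^2 := by
    have hz2 : (∑' k, ‖z k‖^2) = ∑ k ∈ s, ‖z k‖^2 :=
      tsum_eq_sum (fun k hk => by simp [hzs k hk])
    have hS2 : (∑' k, (lam k - μ)^2 * ‖z k‖^2) = ∑ k ∈ s, (lam k - μ)^2 * ‖z k‖^2 :=
      tsum_eq_sum (fun k hk => by simp [hzs k hk])
    rw [hz2, hS2, Finset.mul_sum]
    apply Finset.sum_le_sum
    intro k _
    by_cases hzk : z k = 0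
    · simp [hzk]
    · have h1 := hsupp k hzk
      have h2 : ε^2 ≤ (lam k - μ)^2 := by
        have := abs_nonneg (μ - lam k)
        have h3 : (μ - lam k)^2 = (lam k - μ)^2 := by ring
        nlinarith [sq_abs (μ - lam k)]
      have h4 : (0:ℝ) < ε^2 := by positivity
      rw [← mul_assoc]
      have h5 : (1:ℝ) ≤ ε⁻¹^2 * (lam k - μ)^2 := by
        rw [inv_pow]
        calc (1:ℝ) = (ε^2)⁻¹ * ε^2 := by field_simp
          _ ≤ (ε^2)⁻¹ * (lam k - μ)^2 := mul_le_mul_of_nonneg_left h2 (by positivity)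
      nlinarith [sq_nonneg ‖z k‖]
  -- combine
  have hfnn : 0 ≤ ∫ t in (0:ℝ)..1, (f t + g t) :=
    intervalIntegral.integral_nonneg (by norm_num)
      (fun t _ => add_nonneg (norm_nonneg _) (norm_nonneg _))
  have hCznorm : ‖C z‖^2 ≤ (∫ t in (0:ℝ)..1, (f t + g t))^2 := by
    have h0 : ‖C z‖ ≤ ∫ t in (0:ℝ)..1, (f t + g t) := hnorm
    nlinarith [norm_nonneg (C z)]
  calc ‖C z‖^2 ≤ (∫ t in (0:ℝ)..1, (f t + g t))^2 := hCznorm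
    _ ≤ ∫ t in (0:ℝ)..1, (f t + g t)^2 := hcs
    _ ≤ 2 * (∫ t in (0:ℝ)..1, (f t)^2) + 2 * (∫ t in (0:ℝ)..1, (g t)^2) := hsplit
    _ ≤ 2 * (K * ∑' k, ‖z k‖^2) + 2 * (K * ∑' k, ‖w k‖^2) := by
        have := hadmz; have := hadmw; linarith
    _ ≤ (2*K*(1 + ε⁻¹^2)) * ∑' k, (lam k - μ)^2 * ‖z k‖^2 := by
        rw [hwsum]
        nlinarith [hzsum, hSnn, hK.le]

/-- Uniform wave-packet bound for admissible observation operators (Proposition 4.4). -/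
theorem stmt11 (lam : ℕ → ℝ) (hmono : StrictMono lam) (hpos : ∀ k, 0 < lam k)
    (hlim : Filter.Tendsto lam Filter.atTop Filter.atTop)
    (Y : Type) [NormedAddCommGroup Y] [InnerProductSpace ℂ Y] [CompleteSpace Y]
    (C : (ℕ → ℂ) →ₗ[ℂ] Y)
    (c : ℝ) (hc : 0 ≤ c)
    (hbdd : ∀ z : ℕ → ℂ, MemX2 lam z →
      ‖C z‖ ≤ c * Real.sqrt (∑' k, (lam k)^2 * ‖z k‖^2))
    (hadm : ∀ T : ℝ, 0 < T → ∃ K : ℝ, 0 < K ∧ ∀ z0 : ℕ → ℂ, MemX2 lam z0 →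
      (∫ t in (0:ℝ)..T, ‖C (zEvol lam z0 t)‖^2) ≤ K * ∑' k, ‖z0 k‖^2)
    (ε : ℝ) (hε : 0 < ε) :
    ∃ M : ℝ, 0 < M ∧ ∀ μ : ℝ, 0 ≤ μ → ∀ z : ℕ → ℂ, MemX2 lam z →
      (∀ k, z k ≠ 0 → ε ≤ |μ - lam k|) →
      ‖C z‖^2 ≤ M * ∑' k, (lam k - μ)^2 * ‖z k‖^2 := by
  obtain ⟨K, hK, hadm1⟩ := hadm 1 one_pos
  have hMpos : (0:ℝ) < 2*K*(1 + ε⁻¹^2) := by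
    have h1 : (0:ℝ) < 1 + ε⁻¹^2 := by positivity
    nlinarith
  refine ⟨2*K*(1 + ε⁻¹^2), hMpos, ?_⟩
  intro μ hμ z hz hsupp
  -- summability facts
  have hz2 : Summable (fun k => ‖z k‖^2) := by
    apply Summable.of_nonneg_of_le (fun k => sq_nonneg _) (fun k => ?_)
      (hz.mul_left ((lam 0)^2)⁻¹)
    have h1 : lam 0 ≤ lam k := hmono.monotone (Nat.zero_le k)
    have h0 := hpos 0
    have h2 : (1:ℝ) ≤ ((lam 0)^2)⁻¹ * (lam k)^2 := by
      calc (1:ℝ) = ((lam 0)^2)⁻¹ * (lam 0)^2 := by field_simp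
        _ ≤ ((lam 0)^2)⁻¹ * (lam k)^2 :=
            mul_le_mul_of_nonneg_left (by nlinarith) (by positivity)
    nlinarith [sq_nonneg ‖z k‖]
  have hS : Summable (fun k => (lam k - μ)^2 * ‖z k‖^2) := by
    apply Summable.of_nonneg_of_le
      (fun k => mul_nonneg (sq_nonneg _) (sq_nonneg _)) (fun k => ?_)
      ((hz.mul_left 2).add (hz2.mul_left (2*μ^2)))
    have : (lam k - μ)^2 ≤ 2*(lam k)^2 + 2*μ^2 := by nlinarith [sq_nonneg (lam k + μ)]
    nlinarith [sq_nonneg ‖z k‖]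
  have hSnn : (0:ℝ) ≤ ∑' k, (lam k - μ)^2 * ‖z k‖^2 :=
    tsum_nonneg (fun k => mul_nonneg (sq_nonneg _) (sq_nonneg _))
  -- truncations
  set zN : ℕ → ℕ → ℂ := fun N k => if k ∈ Finset.range N then z k else 0 with hzN
  have hboundN : ∀ N, ‖C (zN N)‖^2 ≤ (2*K*(1 + ε⁻¹^2)) * ∑' k, (lam k - μ)^2 * ‖z k‖^2 := by
    intro N
    have h1 := key lam C K hK hadm1 ε μ hε (zN N) (Finset.range N)
      (fun k hk => if_neg hk)
      (fun k hzk => hsupp k (fun h0 => hzk (by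
        show (if k ∈ Finset.range N then z k else 0) = 0
        rw [h0]; simp)))
    have h2 : (∑' k, (lam k - μ)^2 * ‖zN N k‖^2) ≤ ∑' k, (lam k - μ)^2 * ‖z k‖^2 := by
      have he : (∑' k, (lam k - μ)^2 * ‖zN N k‖^2)
          = ∑ k ∈ Finset.range N, (lam k - μ)^2 * ‖z k‖^2 := by
        rw [tsum_eq_sum (s := Finset.range N) (fun k hk => by
          have h0 : zN N k = 0 := if_neg hk
          rw [h0]; simp)]
        apply Finset.sum_congr rfl
        intro k hk
        have h0 : zN N k = z k := if_pos hk
        rw [h0]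
      rw [he]
      exact Summable.sum_le_tsum _ (fun k _ => mul_nonneg (sq_nonneg _) (sq_nonneg _)) hS
    calc ‖C (zN N)‖^2 ≤ (2*K*(1 + ε⁻¹^2)) * ∑' k, (lam k - μ)^2 * ‖zN N k‖^2 := h1
      _ ≤ _ := by nlinarith [h2]
  -- convergence C (zN N) → C z
  have htend : Filter.Tendsto (fun N => C (zN N)) Filter.atTop (nhds (C z)) := by
    rw [tendsto_iff_norm_sub_tendsto_zero]
    set u : ℕ → ℝ := fun k => (lam k)^2 * ‖z k‖^2 with hu
    set dN : ℕ → ℕ → ℂ := fun N k => if k ∈ Finset.range N then 0 else z k with hdN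
    have hsum_dN : ∀ N, Summable (fun k => (lam k)^2 * ‖dN N k‖^2) := by
      intro N
      apply Summable.of_nonneg_of_le (fun k => mul_nonneg (sq_nonneg _) (sq_nonneg _))
        (fun k => ?_) hz
      by_cases hk : k ∈ Finset.range N
      · have h0 : dN N k = 0 := if_pos hk
        rw [h0]; simp; positivity
      · have h0 : dN N k = z k := if_neg hk
        rw [h0]
    have hdecomp : ∀ N, C (zN N) - C z = -(C (dN N)) := by
      intro N
      have : z = zN N + dN N := by
        funext k
        show z k = (if k ∈ Finset.range N then z k else 0) + (if k ∈ Finset.range N then 0 else z k)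
        by_cases hk : k ∈ Finset.range N
        · rw [if_pos hk, if_pos hk, add_zero]
        · rw [if_neg hk, if_neg hk, zero_add]
      rw [this, map_add]
      abel
    have htail : ∀ N, (∑' k, (lam k)^2 * ‖dN N k‖^2)
        = (∑' k, u k) - ∑ k ∈ Finset.range N, u k := by
      intro N
      have hzero : ∀ k ∈ Finset.range N, (lam k)^2 * ‖dN N k‖^2 = 0 := by
        intro k hk
        have h0 : dN N k = 0 := if_pos hk
        rw [h0]; simp
      have hid : ∀ k, (lam k)^2 * ‖dN N k‖^2
          = u k - (if k ∈ Finset.range N then u k else 0) := by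
        intro k
        by_cases hk : k ∈ Finset.range N
        · have h0 : dN N k = 0 := if_pos hk
          rw [h0, if_pos hk]; simp
        · have h0 : dN N k = z k := if_neg hk
          rw [h0, if_neg hk, sub_zero, hu]
      have hsum2 : Summable (fun k => if k ∈ Finset.range N then u k else 0) :=
        summable_of_ne_finset_zero (s := Finset.range N) (fun k hk => if_neg hk)
      calc (∑' k, (lam k)^2 * ‖dN N k‖^2)
          = ∑' k, (u k - if k ∈ Finset.range N then u k else 0) := tsum_congr hid
        _ = (∑' k, u k) - ∑' k, (if k ∈ Finset.range N then u k else 0) :=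
            Summable.tsum_sub hz hsum2
        _ = (∑' k, u k) - ∑ k ∈ Finset.range N, u k := by
            congr 1
            rw [tsum_eq_sum (s := Finset.range N) (fun k hk => if_neg hk)]
            exact Finset.sum_congr rfl (fun k hk => if_pos hk)
    have htail0 : Filter.Tendsto (fun N => ∑' k, (lam k)^2 * ‖dN N k‖^2)
        Filter.atTop (nhds 0) := by
      simp only [htail]
      have := hz.hasSum.tendsto_sum_nat
      have h0 : Filter.Tendsto (fun N => (∑' k, u k) - ∑ k ∈ Finset.range N, u k)
          Filter.atTop (nhds ((∑' k, u k) - (∑' k, u k))) :=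
        Filter.Tendsto.sub tendsto_const_nhds this
      simpa using h0
    have hbnd : ∀ N, ‖C (zN N) - C z‖ ≤ c * Real.sqrt (∑' k, (lam k)^2 * ‖dN N k‖^2) := by
      intro N
      rw [hdecomp N, norm_neg]
      exact hbdd (dN N) (hsum_dN N)
    apply squeeze_zero (fun N => norm_nonneg _) hbnd
    have hsq : Filter.Tendsto (fun N => Real.sqrt (∑' k, (lam k)^2 * ‖dN N k‖^2))
        Filter.atTop (nhds 0) := by
      have := (Real.continuous_sqrt.tendsto 0).comp htail0
      simpa [Function.comp_def] using this
    simpa using hsq.const_mul c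
  have htend2 : Filter.Tendsto (fun N => ‖C (zN N)‖^2) Filter.atTop (nhds (‖C z‖^2)) :=
    (htend.norm).pow 2
  exact le_of_tendsto htend2 (Filter.Eventually.of_forall hboundN)
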